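/- A function φ : ℝ → ℝ satisfies: φ has derivative 1/x at every point x of ℝ \ {0} within ℝ \ {0}, if and only if there exist constants c₁, c₂ ∈ ℝ such that φ(x) = log|x| + c₁ for all x < 0 and φ(x) = log|x| + c₂ for all x > 0. -/

import Mathlib

lemma const_on_open_convex {g : ℝ → ℝ} {s : Set ℝ} (ho : IsOpen s) (hc : Convex ℝ s)
    (h : ∀ x ∈ s, HasDerivWithinAt g 0 s x) {x y : ℝ} (hx : x ∈ s) (hy : y ∈ s) :
    g x = g y := by
  refine hc.is_const_of_fderivWithin_eq_zero
    (fun z hz => (h z hz).differentiableWithinAt) (fun z hz => ?_) hx hy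
  have := (h z hz).hasFDerivWithinAt.fderivWithin (ho.uniqueDiffOn z hz)
  rw [this]; ext; simp

theorem stmt10 (φ : ℝ → ℝ) :
    (∀ x ∈ ({0}ᶜ : Set ℝ), HasDerivWithinAt φ (1 / x) ({0}ᶜ : Set ℝ) x) ↔
      ∃ c₁ c₂ : ℝ, (∀ x < (0 : ℝ), φ x = Real.log |x| + c₁) ∧
        (∀ x > (0 : ℝ), φ x = Real.log |x| + c₂) := by
  constructor
  · intro h
    refine ⟨φ (-1) - Real.log 1, φ 1 - Real.log 1, ?_, ?_⟩
    · intro x hx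
      have key : ∀ z ∈ Set.Iio (0:ℝ), HasDerivWithinAt (fun y => φ y - Real.log |y|) 0
          (Set.Iio (0:ℝ)) z := by
        intro z hz
        have hz0 : z ≠ 0 := ne_of_lt hz
        have h1 : HasDerivWithinAt φ (1/z) (Set.Iio (0:ℝ)) z :=
          (h z hz0).mono (fun y hy => ne_of_lt hy)
        have h2 : HasDerivWithinAt (fun y => Real.log |y|) (1/z) (Set.Iio (0:ℝ)) z := by
          have : HasDerivAt Real.log (1/z) z := by
            simpa [one_div] using Real.hasDerivAt_log hz0
          refine (this.hasDerivWithinAt).congr (fun y hy => ?_) ?_ <;>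
            simp [Real.log_abs]
        have h3 := h1.sub h2
        rw [sub_self] at h3
        exact h3
      have := const_on_open_convex isOpen_Iio (convex_Iio 0) key hx (by norm_num : (-1:ℝ) ∈ Set.Iio 0)
      have habs : |(-1:ℝ)| = 1 := by norm_num
      simp only [habs] at this
      linarith
    · intro x hx
      have key : ∀ z ∈ Set.Ioi (0:ℝ), HasDerivWithinAt (fun y => φ y - Real.log |y|) 0
          (Set.Ioi (0:ℝ)) z := by
        intro z hz
        have hz0 : z ≠ 0 := ne_of_gt hz
        have h1 : HasDerivWithinAt φ (1/z) (Set.Ioi (0:ℝ)) z :=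
          (h z hz0).mono (fun y hy => ne_of_gt hy)
        have h2 : HasDerivWithinAt (fun y => Real.log |y|) (1/z) (Set.Ioi (0:ℝ)) z := by
          have : HasDerivAt Real.log (1/z) z := by
            simpa [one_div] using Real.hasDerivAt_log hz0
          refine (this.hasDerivWithinAt).congr (fun y hy => ?_) ?_ <;>
            simp [Real.log_abs]
        have h3 := h1.sub h2
        rw [sub_self] at h3
        exact h3
      have := const_on_open_convex isOpen_Ioi (convex_Ioi 0) key hx (by norm_num : (1:ℝ) ∈ Set.Ioi 0)
      have habs : |(1:ℝ)| = 1 := by norm_num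
      simp only [habs] at this
      linarith
  · rintro ⟨c₁, c₂, h₁, h₂⟩ x hx
    have hx0 : x ≠ 0 := hx
    have hlog : HasDerivAt (fun y => Real.log |y|) (1/x) x := by
      have : HasDerivAt Real.log (1/x) x := by
        simpa [one_div] using Real.hasDerivAt_log hx0
      refine this.congr_of_eventuallyEq ?_
      filter_upwards [isOpen_compl_singleton.mem_nhds (by exact hx0 : x ∈ ({0}ᶜ : Set ℝ))]
        with y hy
      simp [Real.log_abs]
    rcases lt_or_gt_of_ne hx0 with hneg | hpos
    · have : HasDerivAt (fun y => Real.log |y| + c₁) (1/x) x := by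
        simpa using hlog.add_const c₁
      refine (this.congr_of_eventuallyEq ?_).hasDerivWithinAt
      filter_upwards [isOpen_Iio.mem_nhds hneg] with y hy
      exact h₁ y hy
    · have : HasDerivAt (fun y => Real.log |y| + c₂) (1/x) x := by
        simpa using hlog.add_const c₂
      refine (this.congr_of_eventuallyEq ?_).hasDerivWithinAt
      filter_upwards [isOpen_Ioi.mem_nhds hpos] with y hy
      exact h₂ y hy
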